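/- Fix an integer k ≥ 2 and a real number E ≥ 1. Then card Q(k,n) is asymptotic to (n₁⋯n_k)/ζ(k) among tuples of bounded eccentricity: for every ε > 0 there exists M ≥ 1 such that for every k-tuple n = (n₁,…,n_k) of real numbers with nᵢ ≥ 1 for all i, max{n₁,…,n_k} ≤ E · min{n₁,…,n_k}, and min{n₁,…,n_k} ≥ M, one has |card Q(k,n) · ζ(k) / (n₁⋯n_k) − 1| ≤ ε. -/

import Mathlib

/-- `Qset k n` is the set of `k`-tuples of positive integers `(a₁, …, a_k)` with
`gcd(a₁, …, a_k) = 1` and `aᵢ ≤ nᵢ` for each `i`. -/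
def Qset (k : ℕ) (n : Fin k → ℝ) : Set (Fin k → ℕ) :=
  {a | (∀ i, 0 < a i ∧ (a i : ℝ) ≤ n i) ∧ Finset.univ.gcd a = 1}

/-- The value `ζ(k)` of the Riemann zeta function at an integer `k ≥ 2`,
as the real series `∑ 1/mᵏ`. -/
noncomputable def zetaVal (k : ℕ) : ℝ := ∑' m : ℕ, 1 / (m + 1 : ℝ) ^ k

open Finset ArithmeticFunction Filter
open scoped ArithmeticFunction.Moebius ArithmeticFunction.zeta
lemma count_box_dvd (k d : ℕ) (N : Fin k → ℕ) :
    ((Fintype.piFinset fun i => Finset.Ioc 0 (N i)).filter fun a => ∀ i, d ∣ a i).card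
      = ∏ i, N i / d := by
  have h : ((Fintype.piFinset fun i => Finset.Ioc 0 (N i)).filter fun a => ∀ i, d ∣ a i)
      = Fintype.piFinset fun i => (Finset.Ioc 0 (N i)).filter (d ∣ ·) := by
    ext a
    simp only [Finset.mem_filter, Fintype.mem_piFinset, ← forall_and]
  rw [h, Fintype.card_piFinset]
  simp [Nat.Ioc_filter_dvd_card_eq_div]

lemma card_coprime_eq (k : ℕ) (i₀ : Fin k) (N : Fin k → ℕ) (hN : ∀ i, 1 ≤ N i)
    (D : ℕ) (hD : N i₀ ≤ D) :
    (((Fintype.piFinset fun i => Finset.Ioc 0 (N i)).filter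
        fun a => Finset.univ.gcd a = 1).card : ℤ)
      = ∑ d ∈ Finset.Ioc 0 D, μ d * ∏ i, ((N i / d : ℕ) : ℤ) := by
  classical
  rw [Finset.card_filter]
  push_cast
  have key : ∀ a ∈ Fintype.piFinset fun i => Finset.Ioc 0 (N i),
      (if Finset.univ.gcd a = 1 then (1:ℤ) else 0)
        = ∑ e ∈ Finset.Ioc 0 D, if e ∣ Finset.univ.gcd a then μ e else 0 := by
    intro a ha
    simp only [Fintype.mem_piFinset, Finset.mem_Ioc] at ha
    set g := Finset.univ.gcd a with hg
    have hg0 : g ≠ 0 := by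
      intro h
      have := (Finset.gcd_eq_zero_iff.mp h) i₀ (Finset.mem_univ i₀)
      have := (ha i₀).1
      omega
    have hgD : g ≤ D := by
      have hdvd : g ∣ a i₀ := Finset.gcd_dvd (Finset.mem_univ i₀)
      have := Nat.le_of_dvd (ha i₀).1 hdvd
      have := (ha i₀).2
      omega
    have hset : (Finset.Ioc 0 D).filter (· ∣ g) = g.divisors := by
      ext e
      simp only [Finset.mem_filter, Finset.mem_Ioc, Nat.mem_divisors]
      constructor
      · rintro ⟨⟨h1, h2⟩, h3⟩; exact ⟨h3, hg0⟩
      · rintro ⟨h1, h2⟩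
        refine ⟨⟨Nat.pos_of_dvd_of_pos h1 (Nat.pos_of_ne_zero hg0),
          le_trans (Nat.le_of_dvd (Nat.pos_of_ne_zero hg0) h1) hgD⟩, h1⟩
    rw [← Finset.sum_filter, hset]
    have := congrArg (fun f : ArithmeticFunction ℤ => f g) moebius_mul_coe_zeta
    simp only [coe_mul_zeta_apply, one_apply] at this
    rw [this]
  rw [Finset.sum_congr rfl key, Finset.sum_comm]
  refine Finset.sum_congr rfl fun e he => ?_
  rw [← Finset.sum_filter, Finset.sum_const, nsmul_eq_mul,
    Finset.filter_congr (fun a _ => by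
      simp only [Finset.dvd_gcd_iff, Finset.mem_univ, forall_true_left]
      exact Iff.rfl),
    count_box_dvd k e N]
  push_cast
  ring

lemma summable_g (k : ℕ) (hk : 2 ≤ k) : Summable (fun d : ℕ => 1 / ((d : ℝ) + 1) ^ k) := by
  have h : Summable (fun d : ℕ => 1 / (d : ℝ) ^ k) := (Real.summable_one_div_nat_pow).mpr hk
  have := (summable_nat_add_iff (f := fun d : ℕ => 1 / (d : ℝ) ^ k) 1).mpr h
  simpa [Nat.cast_add] using this

lemma summable_f (k : ℕ) (hk : 2 ≤ k) :
    Summable (fun d : ℕ => ((μ (d + 1) : ℤ) : ℝ) / ((d : ℝ) + 1) ^ k) := by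
  refine Summable.of_norm_bounded (summable_g k hk) fun d => ?_
  have h1 : |(μ (d + 1) : ℤ)| ≤ 1 := abs_moebius_le_one
  have h2 : (0:ℝ) < ((d : ℝ) + 1) ^ k := by positivity
  rw [norm_div, Real.norm_eq_abs, Real.norm_eq_abs, abs_of_pos h2]
  rw [div_le_div_iff₀ h2 h2, ← Int.cast_abs]
  apply mul_le_mul_of_nonneg_right _ (le_of_lt h2)
  exact_mod_cast h1

lemma zeta_mul_S (k : ℕ) (hk : 2 ≤ k) :
    zetaVal k * (∑' d : ℕ, ((μ (d + 1) : ℤ) : ℝ) / ((d : ℝ) + 1) ^ k) = 1 := by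
  have hre : 1 < ((k : ℂ)).re := by
    simp only [Complex.natCast_re]
    exact_mod_cast lt_of_lt_of_le one_lt_two hk
  have hmain := LSeries_zeta_mul_Lseries_moebius hre
  have hz : LSeries (fun n => ((ζ n : ℕ) : ℂ)) (k : ℂ) = ((zetaVal k : ℝ) : ℂ) := by
    have hsum : LSeriesSummable (fun n => ((ζ n : ℕ) : ℂ)) (k : ℂ) :=
      (LSeriesSummable_zeta_iff).mpr hre
    rw [LSeries, Summable.tsum_eq_zero_add hsum]
    rw [zetaVal, Complex.ofReal_tsum]
    simp only [LSeries.term_zero, zero_add]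
    refine tsum_congr fun n => ?_
    rw [LSeries.term_of_ne_zero (Nat.succ_ne_zero n)]
    have : ((n + 1 : ℕ) : ℂ) ^ (k : ℂ) = ((n + 1 : ℕ) : ℂ) ^ (k : ℕ) := by
      rw [Complex.cpow_natCast]
    rw [this]
    push_cast
    simp [ArithmeticFunction.zeta_apply]
  have hm : LSeries (fun n => ((μ n : ℤ) : ℂ)) (k : ℂ)
      = (((∑' d : ℕ, ((μ (d + 1) : ℤ) : ℝ) / ((d : ℝ) + 1) ^ k) : ℝ) : ℂ) := by
    have hsum : LSeriesSummable (fun n => ((μ n : ℤ) : ℂ)) (k : ℂ) :=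
      (LSeriesSummable_moebius_iff).mpr hre
    rw [LSeries, Summable.tsum_eq_zero_add hsum]
    rw [Complex.ofReal_tsum]
    simp only [LSeries.term_zero, zero_add]
    refine tsum_congr fun n => ?_
    rw [LSeries.term_of_ne_zero (Nat.succ_ne_zero n)]
    have : ((n + 1 : ℕ) : ℂ) ^ (k : ℂ) = ((n + 1 : ℕ) : ℂ) ^ (k : ℕ) := by
      rw [Complex.cpow_natCast]
    rw [this]
    push_cast
    ring
  rw [hz, hm, ← Complex.ofReal_mul] at hmain
  exact_mod_cast hmain

lemma prod_sub_prod_le' (k : ℕ) (x y : Fin k → ℝ) (B : ℝ)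
    (hx : ∀ i, 0 ≤ x i) (hxy : ∀ i, x i ≤ y i) (hyB : ∀ i, y i ≤ B)
    (h1 : ∀ i, y i - x i ≤ 1) :
    0 ≤ ∏ i, y i - ∏ i, x i ∧ ∏ i, y i - ∏ i, x i ≤ k * B ^ (k - 1) := by
  induction k with
  | zero => simp
  | succ m ih =>
    have hB : 0 ≤ B := le_trans (le_trans (hx 0) (hxy 0)) (hyB 0)
    obtain ⟨ih1, ih2⟩ := ih (fun i => x i.succ) (fun i => y i.succ)
      (fun i => hx _) (fun i => hxy _) (fun i => hyB _) (fun i => h1 _)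
    rw [Fin.prod_univ_succ, Fin.prod_univ_succ]
    set X := ∏ i : Fin m, x i.succ with hX
    set Y := ∏ i : Fin m, y i.succ with hY
    have hX0 : 0 ≤ X := Finset.prod_nonneg fun i _ => hx _
    have hY0 : 0 ≤ Y := le_trans hX0 (by linarith)
    have hYB : Y ≤ B ^ m := by
      calc Y ≤ ∏ _i : Fin m, B :=
            Finset.prod_le_prod (fun i _ => le_trans (hx _) (hxy _)) (fun i _ => hyB _)
        _ = B ^ m := by simp [Finset.prod_const]
    have key : y 0 * Y - x 0 * X = (y 0 - x 0) * Y + x 0 * (Y - X) := by ring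
    constructor
    · rw [key]
      have : 0 ≤ (y 0 - x 0) * Y := mul_nonneg (by linarith [hxy 0]) hY0
      have : 0 ≤ x 0 * (Y - X) := mul_nonneg (hx 0) (by linarith)
      linarith
    · rw [key]
      have hb1 : (y 0 - x 0) * Y ≤ 1 * B ^ m :=
        mul_le_mul (h1 0) hYB hY0 zero_le_one
      have hb2 : x 0 * (Y - X) ≤ B * (m * B ^ (m - 1)) :=
        mul_le_mul (le_trans (hxy 0) (hyB 0)) ih2 (by linarith) hB
      have hb3 : B * (m * B ^ (m - 1)) ≤ m * B ^ m := by
        cases m with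
        | zero => simp
        | succ p =>
          have : B * ((p + 1 : ℕ) * B ^ (p + 1 - 1)) = (p + 1 : ℕ) * B ^ (p + 1) := by
            simp only [Nat.add_sub_cancel]
            ring
          rw [this]
      have : ((m + 1 : ℕ) : ℝ) * B ^ (m + 1 - 1) = (m : ℝ) * B ^ m + 1 * B ^ m := by
        simp only [Nat.add_sub_cancel]
        push_cast
        ring
      rw [this]
      linarith

set_option maxHeartbeats 1000000 in
/-- Among tuples of eccentricity at most `E`, `card Q(k,n)` is asymptotic to
`(n₁⋯n_k)/ζ(k)`. -/
theorem card_coprime_tuples_asymptotic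
    (k : ℕ) (hk : 2 ≤ k) (E : ℝ) (hE : 1 ≤ E) :
    ∀ ε : ℝ, 0 < ε → ∃ M : ℝ, 1 ≤ M ∧
      ∀ n : Fin k → ℝ, (∀ i, 1 ≤ n i) → (∀ i j, n i ≤ E * n j) → (∀ i, M ≤ n i) →
        |(Nat.card (Qset k n) : ℝ) * zetaVal k / (∏ i, n i) - 1| ≤ ε := by
  intro ε hε
  classical
  have hE0 : (0:ℝ) < E := lt_of_lt_of_le one_pos hE
  set Z := zetaVal k with hZdef
  set f : ℕ → ℝ := fun d => ((μ (d + 1) : ℤ) : ℝ) / ((d : ℝ) + 1) ^ k with hfdef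
  set g : ℕ → ℝ := fun d => 1 / ((d : ℝ) + 1) ^ k with hgdef
  have hgsum : Summable g := summable_g k hk
  have hfsum : Summable f := summable_f k hk
  have hg0 : ∀ d, 0 ≤ g d := fun d => by positivity
  have hfg : ∀ d, |f d| ≤ g d := by
    intro d
    have h1 : |(μ (d + 1) : ℤ)| ≤ 1 := abs_moebius_le_one
    have h2 : (0:ℝ) < ((d : ℝ) + 1) ^ k := by positivity
    rw [hfdef, hgdef]
    simp only
    rw [abs_div, abs_of_pos h2, div_le_div_iff₀ h2 h2, ← Int.cast_abs]
    apply mul_le_mul_of_nonneg_right _ (le_of_lt h2)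
    exact_mod_cast h1
  set S := ∑' d, f d with hSdef
  have hZS : Z * S = 1 := zeta_mul_S k hk
  have hZ1 : (1:ℝ) ≤ Z := by
    have h0 : g 0 = 1 := by simp [hgdef]
    have := Summable.le_tsum hgsum 0 (fun j _ => hg0 j)
    rw [h0] at this
    exact this
  have hZ0 : (0:ℝ) < Z := lt_of_lt_of_le one_pos hZ1
  -- choose D₀
  have hτ : Tendsto (fun D => ∑' e : ℕ, g (e + D)) atTop (nhds 0) := tendsto_sum_nat_add g
  have hquarter : (0:ℝ) < ε / (4 * Z) := by positivity
  obtain ⟨D₀, hD₀τ, hD₀1⟩ :=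
    ((hτ.eventually (eventually_le_nhds hquarter)).and (eventually_ge_atTop 1)).exists
  set τ := ∑' e : ℕ, g (e + D₀) with hτdef
  have hτ0 : 0 ≤ τ := tsum_nonneg fun e => hg0 _
  -- choose M
  refine ⟨max ((D₀:ℝ) + 1) (2 * Z * D₀ * k * E ^ (2 * k) / ε + 1), ?_, ?_⟩
  · refine le_trans ?_ (le_max_left _ _)
    have : (0:ℝ) ≤ (D₀:ℝ) := Nat.cast_nonneg _
    linarith
  set M := max ((D₀:ℝ) + 1) (2 * Z * D₀ * k * E ^ (2 * k) / ε + 1) with hMdef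
  intro n hn1 hEcc hnM
  have hkpos : 0 < k := by omega
  set i₀ : Fin k := ⟨0, hkpos⟩ with hi₀
  set N : Fin k → ℕ := fun i => ⌊n i⌋₊ with hNdef
  set P : ℝ := ∏ i, n i with hPdef
  set n₀ : ℝ := n i₀ with hn₀def
  have hn0 : ∀ i, 0 < n i := fun i => lt_of_lt_of_le one_pos (hn1 i)
  have hP0 : 0 < P := Finset.prod_pos fun i _ => hn0 i
  have hN1 : ∀ i, 1 ≤ N i := fun i => Nat.le_floor (by exact_mod_cast hn1 i)
  have hMn₀ : M ≤ n₀ := hnM i₀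
  have hM1 : (1:ℝ) ≤ M := by
    refine le_trans ?_ (le_max_left _ _)
    have : (0:ℝ) ≤ (D₀:ℝ) := Nat.cast_nonneg _
    linarith
  have hn₀1 : (1:ℝ) ≤ n₀ := le_trans hM1 hMn₀
  set D : ℕ := N i₀ with hDdef
  have hD₀D : D₀ ≤ D := by
    have h1 : ((D₀:ℝ)) ≤ n i₀ := by
      have := le_trans (le_max_left ((D₀:ℝ) + 1) _) (hnM i₀)
      linarith
    exact Nat.le_floor h1
  -- step 1 : Nat.card = finset card
  set box := Fintype.piFinset fun i => Finset.Ioc 0 (N i) with hbox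
  set Qf := box.filter fun a => Finset.univ.gcd a = 1 with hQf
  have hQset : Qset k n = ↑Qf := by
    ext a
    simp only [Qset, Set.mem_setOf_eq, hQf, Finset.coe_filter, hbox,
      Fintype.mem_piFinset, Finset.mem_Ioc]
    constructor
    · rintro ⟨h1, h2⟩
      exact ⟨fun i => ⟨(h1 i).1, Nat.le_floor (h1 i).2⟩, h2⟩
    · rintro ⟨h1, h2⟩
      refine ⟨fun i => ⟨(h1 i).1, ?_⟩, h2⟩
      exact le_trans (Nat.cast_le.mpr (h1 i).2) (Nat.floor_le (le_of_lt (hn0 i)))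
  have hcard : (Nat.card (Qset k n) : ℝ) = (Qf.card : ℝ) := by
    rw [hQset]
    norm_cast
    exact Nat.card_eq_finsetCard Qf
  -- step 2 : Möbius identity over reals
  set F : ℕ → ℝ := fun d => ∏ i, ((N i / d : ℕ) : ℝ) with hFdef
  have hQreal : (Qf.card : ℝ) = ∑ d ∈ Finset.Ioc 0 D, ((μ d : ℤ) : ℝ) * F d := by
    have := card_coprime_eq k i₀ N hN1 D (le_refl _)
    have h2 : ((Qf.card : ℤ) : ℝ) = ((∑ d ∈ Finset.Ioc 0 D, μ d * ∏ i, ((N i / d : ℕ) : ℤ) : ℤ) : ℝ) := by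
      exact_mod_cast congrArg (fun z : ℤ => (z : ℝ)) this
    rw [Int.cast_natCast] at h2
    rw [h2]
    push_cast
    rfl
  -- per-coordinate facts
  set G : ℕ → ℝ := fun d => ∏ i, (n i / (d:ℝ)) with hGdef
  have hGval : ∀ d : ℕ, G d = P / (d:ℝ) ^ k := by
    intro d
    rw [hGdef]
    simp only
    rw [Finset.prod_div_distrib, Finset.prod_const]
    simp [hPdef]
  have hFG : ∀ d : ℕ, 0 < d → 0 ≤ G d - F d ∧ G d - F d ≤ k * (E * n₀) ^ (k - 1) := by
    intro d hd
    have hd1 : (1:ℝ) ≤ (d:ℝ) := by exact_mod_cast hd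
    have hd0 : (0:ℝ) < (d:ℝ) := by linarith
    refine prod_sub_prod_le' k (fun i => ((N i / d : ℕ) : ℝ)) (fun i => n i / (d:ℝ))
      (E * n₀) (fun i => Nat.cast_nonneg _) ?_ ?_ ?_
    · intro i
      show ((N i / d : ℕ) : ℝ) ≤ n i / (d:ℝ)
      have : (N i / d : ℕ) = ⌊n i / (d:ℝ)⌋₊ := by
        rw [hNdef]
        exact (Nat.floor_div_natCast (n i) d).symm
      rw [this]
      exact Nat.floor_le (div_nonneg (le_of_lt (hn0 i)) (le_of_lt hd0))
    · intro i
      show n i / (d:ℝ) ≤ E * n₀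
      calc n i / (d:ℝ) ≤ n i / 1 := by
            apply div_le_div_of_nonneg_left (le_of_lt (hn0 i)) one_pos hd1
        _ = n i := div_one _
        _ ≤ E * n₀ := hEcc i i₀
    · intro i
      show n i / (d:ℝ) - ((N i / d : ℕ) : ℝ) ≤ 1
      have heq : (N i / d : ℕ) = ⌊n i / (d:ℝ)⌋₊ := by
        rw [hNdef]
        exact (Nat.floor_div_natCast (n i) d).symm
      rw [heq]
      have := Nat.lt_floor_add_one (n i / (d:ℝ))
      linarith
  have hF0 : ∀ d, 0 ≤ F d := fun d => Finset.prod_nonneg fun i _ => Nat.cast_nonneg _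
  have hFleG : ∀ d : ℕ, 0 < d → F d ≤ G d := fun d hd => by linarith [(hFG d hd).1]
  -- decomposition
  have hsplit : ∑ d ∈ Finset.Ioc 0 D, ((μ d : ℤ) : ℝ) * F d
      = ∑ d ∈ Finset.Ioc 0 D₀, ((μ d : ℤ) : ℝ) * F d
        + ∑ d ∈ Finset.Ioc D₀ D, ((μ d : ℤ) : ℝ) * F d := by
    rw [← Finset.sum_Ioc_consecutive _ (Nat.zero_le D₀) hD₀D]
  have hPS : P * S = ∑ d ∈ Finset.Ioc 0 D₀, ((μ d : ℤ) : ℝ) * G d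
      + P * ∑' e : ℕ, f (e + D₀) := by
    have h1 : ∑ e ∈ Finset.range D₀, f e + ∑' e : ℕ, f (e + D₀) = S :=
      Summable.sum_add_tsum_nat_add D₀ hfsum
    have h2 : ∑ d ∈ Finset.Ioc 0 D₀, ((μ d : ℤ) : ℝ) * G d
        = P * ∑ e ∈ Finset.range D₀, f e := by
      rw [Finset.mul_sum]
      rw [show Finset.Ioc 0 D₀ = Finset.Ico 1 (D₀ + 1) by
        exact (Finset.Ico_add_one_add_one_eq_Ioc 0 D₀).symm]
      rw [Finset.sum_Ico_eq_sum_range]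
      simp only [Nat.add_sub_cancel]
      refine Finset.sum_congr rfl fun e he => ?_
      rw [hGval (1 + e)]
      rw [hfdef]
      simp only
      have : ((1 + e : ℕ) : ℝ) = (e : ℝ) + 1 := by push_cast; ring
      rw [this]
      rw [show (1 + e) = (e + 1) by ring]
      field_simp
    rw [← h1, mul_add, h2]
  have hkey : (Qf.card : ℝ) - P * S
      = ∑ d ∈ Finset.Ioc 0 D₀, ((μ d : ℤ) : ℝ) * (F d - G d)
        + ∑ d ∈ Finset.Ioc D₀ D, ((μ d : ℤ) : ℝ) * F d
        - P * ∑' e : ℕ, f (e + D₀) := by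
    rw [hQreal, hsplit, hPS]
    rw [show ∑ d ∈ Finset.Ioc 0 D₀, ((μ d : ℤ) : ℝ) * (F d - G d)
        = ∑ d ∈ Finset.Ioc 0 D₀, ((μ d : ℤ) : ℝ) * F d
          - ∑ d ∈ Finset.Ioc 0 D₀, ((μ d : ℤ) : ℝ) * G d by
      rw [← Finset.sum_sub_distrib]
      exact Finset.sum_congr rfl fun d _ => by ring]
    ring
  -- bounds
  have hmu1 : ∀ d : ℕ, |((μ d : ℤ) : ℝ)| ≤ 1 := by
    intro d
    rw [← Int.cast_abs]
    exact_mod_cast (abs_moebius_le_one (n := d))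
  have hboundA : |∑ d ∈ Finset.Ioc 0 D₀, ((μ d : ℤ) : ℝ) * (F d - G d)|
      ≤ (D₀ : ℝ) * ((k : ℝ) * (E * n₀) ^ (k - 1)) := by
    calc |∑ d ∈ Finset.Ioc 0 D₀, ((μ d : ℤ) : ℝ) * (F d - G d)|
        ≤ ∑ d ∈ Finset.Ioc 0 D₀, |((μ d : ℤ) : ℝ) * (F d - G d)| :=
          Finset.abs_sum_le_sum_abs _ _
      _ ≤ ∑ _d ∈ Finset.Ioc 0 D₀, (k : ℝ) * (E * n₀) ^ (k - 1) := by
          refine Finset.sum_le_sum fun d hd => ?_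
          rw [Finset.mem_Ioc] at hd
          obtain ⟨h1, h2⟩ := hFG d hd.1
          rw [abs_mul, abs_sub_comm (F d) (G d), abs_of_nonneg h1]
          calc |((μ d : ℤ) : ℝ)| * (G d - F d) ≤ 1 * (G d - F d) :=
                mul_le_mul_of_nonneg_right (hmu1 d) h1
            _ = G d - F d := one_mul _
            _ ≤ (k : ℝ) * (E * n₀) ^ (k - 1) := h2
      _ = (D₀ : ℝ) * ((k : ℝ) * (E * n₀) ^ (k - 1)) := by
          rw [Finset.sum_const, Nat.card_Ioc, Nat.sub_zero, nsmul_eq_mul]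
  have hboundB : |∑ d ∈ Finset.Ioc D₀ D, ((μ d : ℤ) : ℝ) * F d| ≤ P * τ := by
    calc |∑ d ∈ Finset.Ioc D₀ D, ((μ d : ℤ) : ℝ) * F d|
        ≤ ∑ d ∈ Finset.Ioc D₀ D, |((μ d : ℤ) : ℝ) * F d| := Finset.abs_sum_le_sum_abs _ _
      _ ≤ ∑ d ∈ Finset.Ioc D₀ D, P * g (d - 1) := by
          refine Finset.sum_le_sum fun d hd => ?_
          rw [Finset.mem_Ioc] at hd
          have hd0 : 0 < d := lt_of_le_of_lt (Nat.zero_le _) hd.1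
          rw [abs_mul, abs_of_nonneg (hF0 d)]
          calc |((μ d : ℤ) : ℝ)| * F d ≤ 1 * F d :=
                mul_le_mul_of_nonneg_right (hmu1 d) (hF0 d)
            _ = F d := one_mul _
            _ ≤ G d := hFleG d hd0
            _ = P * g (d - 1) := by
                rw [hGval d, hgdef]
                simp only
                have : ((d - 1 : ℕ) : ℝ) + 1 = (d : ℝ) := by
                  have := Nat.succ_pred_eq_of_pos hd0
                  exact_mod_cast congrArg (fun m : ℕ => (m : ℝ)) this
                rw [this]
                field_simp
      _ = P * ∑ d ∈ Finset.Ioc D₀ D, g (d - 1) := by rw [Finset.mul_sum]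
      _ ≤ P * τ := by
          refine mul_le_mul_of_nonneg_left ?_ (le_of_lt hP0)
          rw [show Finset.Ioc D₀ D = Finset.Ico (D₀ + 1) (D + 1) by exact (Finset.Ico_add_one_add_one_eq_Ioc D₀ D).symm]
          rw [Finset.sum_Ico_eq_sum_range]
          have hre : ∀ e ∈ Finset.range (D + 1 - (D₀ + 1)), g (D₀ + 1 + e - 1) = g (e + D₀) := by
            intro e _
            have h' : D₀ + 1 + e - 1 = e + D₀ := by omega
            rw [h']
          rw [Finset.sum_congr rfl hre, hτdef]
          exact Summable.sum_le_tsum _ (fun e _ => hg0 _)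
            ((summable_nat_add_iff D₀).mpr hgsum)
  have hboundC : |P * ∑' e : ℕ, f (e + D₀)| ≤ P * τ := by
    rw [abs_mul, abs_of_pos hP0]
    refine mul_le_mul_of_nonneg_left ?_ (le_of_lt hP0)
    calc |∑' e : ℕ, f (e + D₀)| ≤ ∑' e : ℕ, |f (e + D₀)| := by
          have := norm_tsum_le_tsum_norm (f := fun e : ℕ => f (e + D₀))
            (((summable_nat_add_iff D₀).mpr hfsum).abs)
          simpa using this
      _ ≤ ∑' e : ℕ, g (e + D₀) :=
          Summable.tsum_le_tsum (fun e => hfg _) (((summable_nat_add_iff D₀).mpr hfsum).abs)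
            ((summable_nat_add_iff D₀).mpr hgsum)
      _ = τ := by rw [hτdef]
  have hQS : |(Qf.card : ℝ) - P * S|
      ≤ (D₀ : ℝ) * ((k : ℝ) * (E * n₀) ^ (k - 1)) + 2 * (P * τ) := by
    rw [hkey]
    calc |∑ d ∈ Finset.Ioc 0 D₀, ((μ d : ℤ) : ℝ) * (F d - G d)
        + ∑ d ∈ Finset.Ioc D₀ D, ((μ d : ℤ) : ℝ) * F d
        - P * ∑' e : ℕ, f (e + D₀)|
        ≤ |∑ d ∈ Finset.Ioc 0 D₀, ((μ d : ℤ) : ℝ) * (F d - G d)|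
          + |∑ d ∈ Finset.Ioc D₀ D, ((μ d : ℤ) : ℝ) * F d|
          + |P * ∑' e : ℕ, f (e + D₀)| := by
            exact le_trans (abs_sub _ _) (by gcongr; exact abs_add_le _ _)
      _ ≤ (D₀ : ℝ) * ((k : ℝ) * (E * n₀) ^ (k - 1)) + P * τ + P * τ := by
            gcongr
      _ = (D₀ : ℝ) * ((k : ℝ) * (E * n₀) ^ (k - 1)) + 2 * (P * τ) := by ring
  -- final computation
  have hrw : (Nat.card (Qset k n) : ℝ) * Z / P - 1 = ((Qf.card : ℝ) - P * S) * Z / P := by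
    rw [hcard]
    have h1 : ((Qf.card : ℝ) - P * S) * Z = (Qf.card : ℝ) * Z - P := by
      rw [sub_mul, mul_assoc, mul_comm S Z, hZS, mul_one]
    rw [h1, sub_div, div_self (ne_of_gt hP0)]
  rw [hrw, abs_div, abs_of_pos hP0, abs_mul, abs_of_pos hZ0]
  rw [div_le_iff₀ hP0]
  -- two pieces
  have hterm2 : 2 * (P * τ) * Z ≤ ε / 2 * P := by
    have : τ ≤ ε / (4 * Z) := hD₀τ
    calc 2 * (P * τ) * Z ≤ 2 * (P * (ε / (4 * Z))) * Z := by gcongr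
      _ = ε / 2 * P := by field_simp; ring
  have hterm1 : (D₀ : ℝ) * ((k : ℝ) * (E * n₀) ^ (k - 1)) * Z ≤ ε / 2 * P := by
    -- P ≥ (n₀ / E) ^ k
    have hPn : (n₀ / E) ^ k ≤ P := by
      calc (n₀ / E) ^ k = ∏ _i : Fin k, (n₀ / E) := by simp [Finset.prod_const, div_pow]
        _ ≤ ∏ i, n i := by
            refine Finset.prod_le_prod (fun i _ => by positivity) fun i _ => ?_
            rw [div_le_iff₀ hE0, mul_comm]
            exact hEcc i₀ i
    have hn₀0 : (0:ℝ) < n₀ := lt_of_lt_of_le one_pos hn₀1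
    obtain ⟨m, rfl⟩ : ∃ m, k = m + 2 := ⟨k - 2, by omega⟩
    have hkm : (m + 2) - 1 = m + 1 := rfl
    rw [hkm]
    -- (E n₀)^(m+1) * n₀ ≤ E^(2(m+2)) * P
    have hkey2 : (E * n₀) ^ (m + 1) * n₀ ≤ E ^ (2 * (m + 2)) * P := by
      calc (E * n₀) ^ (m + 1) * n₀ = E ^ (m + 1) * n₀ ^ (m + 2) := by ring
        _ ≤ E ^ (m + 2) * n₀ ^ (m + 2) := by
            have h1 : E ^ (m + 1) ≤ E ^ (m + 2) := pow_le_pow_right₀ hE (Nat.le_succ _)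
            have h0 : (0:ℝ) ≤ n₀ ^ (m + 2) := by positivity
            exact mul_le_mul_of_nonneg_right h1 h0
        _ = E ^ (2 * (m + 2)) * (n₀ / E) ^ (m + 2) := by
            rw [div_pow, mul_div_assoc', eq_div_iff (by positivity)]
            ring
        _ ≤ E ^ (2 * (m + 2)) * P :=
            mul_le_mul_of_nonneg_left hPn (by positivity)
    -- M bound
    have hMε : 2 * Z * (D₀:ℝ) * (m + 2 : ℕ) * E ^ (2 * (m + 2)) / ε + 1 ≤ M :=
      le_max_right _ _
    have hεM : 2 * Z * (D₀:ℝ) * ((m + 2 : ℕ):ℝ) * E ^ (2 * (m + 2)) + ε ≤ ε * M := by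
      have := mul_le_mul_of_nonneg_left hMε (le_of_lt hε)
      calc 2 * Z * (D₀:ℝ) * ((m + 2 : ℕ):ℝ) * E ^ (2 * (m + 2)) + ε
          = ε * (2 * Z * (D₀:ℝ) * ((m + 2 : ℕ):ℝ) * E ^ (2 * (m + 2)) / ε + 1) := by
            field_simp
        _ ≤ ε * M := this
    -- chain
    have hEn : (0:ℝ) < E ^ (2 * (m + 2)) := by positivity
    have hstep : (D₀ : ℝ) * (((m+2:ℕ) : ℝ) * (E * n₀) ^ (m + 1)) * Z * n₀
        ≤ (D₀ : ℝ) * (((m+2:ℕ) : ℝ)) * Z * (E ^ (2 * (m + 2)) * P) := by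
      have h := hkey2
      have hD₀0 : (0:ℝ) ≤ (D₀:ℝ) := Nat.cast_nonneg _
      have hk0 : (0:ℝ) ≤ ((m+2:ℕ):ℝ) := Nat.cast_nonneg _
      calc (D₀ : ℝ) * (((m+2:ℕ) : ℝ) * (E * n₀) ^ (m + 1)) * Z * n₀
          = ((D₀ : ℝ) * ((m+2:ℕ) : ℝ) * Z) * ((E * n₀) ^ (m + 1) * n₀) := by ring
        _ ≤ ((D₀ : ℝ) * ((m+2:ℕ) : ℝ) * Z) * (E ^ (2 * (m + 2)) * P) := by
            refine mul_le_mul_of_nonneg_left h ?_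
            positivity
        _ = (D₀ : ℝ) * (((m+2:ℕ) : ℝ)) * Z * (E ^ (2 * (m + 2)) * P) := by ring
    -- so LHS ≤ D₀ * k * Z * E^{2k} * P / n₀ ≤ ... ≤ ε/2 * P
    have hMpos : (0:ℝ) < M := lt_of_lt_of_le one_pos hM1
    have hMn : M ≤ n₀ := hMn₀
    -- divide hstep by n₀
    have hfinal : (D₀ : ℝ) * (((m+2:ℕ) : ℝ) * (E * n₀) ^ (m + 1)) * Z
        ≤ (D₀ : ℝ) * (((m+2:ℕ) : ℝ)) * Z * E ^ (2 * (m + 2)) * P / M := by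
      rw [le_div_iff₀ hMpos]
      calc (D₀ : ℝ) * (((m+2:ℕ) : ℝ) * (E * n₀) ^ (m + 1)) * Z * M
          ≤ (D₀ : ℝ) * (((m+2:ℕ) : ℝ) * (E * n₀) ^ (m + 1)) * Z * n₀ := by
            refine mul_le_mul_of_nonneg_left hMn ?_
            positivity
        _ ≤ (D₀ : ℝ) * (((m+2:ℕ) : ℝ)) * Z * (E ^ (2 * (m + 2)) * P) := hstep
        _ = (D₀ : ℝ) * (((m+2:ℕ) : ℝ)) * Z * E ^ (2 * (m + 2)) * P := by ring
    refine le_trans hfinal ?_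
    rw [div_le_iff₀ hMpos]
    set C := (D₀ : ℝ) * (((m+2:ℕ) : ℝ)) * Z * E ^ (2 * (m + 2)) with hCdef
    have h2C : 2 * C + ε ≤ ε * M := by
      calc 2 * C + ε = 2 * Z * (D₀:ℝ) * ((m + 2 : ℕ):ℝ) * E ^ (2 * (m + 2)) + ε := by
            rw [hCdef]; ring
        _ ≤ ε * M := hεM
    have hCM : C ≤ ε / 2 * M := by linarith
    calc C * P ≤ (ε / 2 * M) * P := mul_le_mul_of_nonneg_right hCM hP0.le
      _ = ε / 2 * P * M := by ring
  calc |(Qf.card : ℝ) - P * S| * Z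
      ≤ ((D₀ : ℝ) * ((k : ℝ) * (E * n₀) ^ (k - 1)) + 2 * (P * τ)) * Z := by
        exact mul_le_mul_of_nonneg_right hQS (le_of_lt hZ0)
    _ = (D₀ : ℝ) * ((k : ℝ) * (E * n₀) ^ (k - 1)) * Z + 2 * (P * τ) * Z := by ring
    _ ≤ ε / 2 * P + ε / 2 * P := by
        exact add_le_add hterm1 hterm2
    _ = ε * P := by ring
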